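/- Let V be a subspace of K⟨G⟩. Then the quotient K⟨G⟩/V is isomorphic as a K-vector space to the span of the set of elements of G that are not leading terms of nonzero elements of V, i.e. K⟨G⟩/V ≅ K⟨{g ∈ G : g ∉ lt(V)}⟩. -/
import Mathlib

open Finsupp

variable {K G : Type*} [Field K] [LinearOrder G] [WellFoundedLT G]

omit [WellFoundedLT G] in
lemma aux_max_lt {f : G →₀ K} {g : G} (h0 : f g = 0)
    (hle : ∀ x ∈ f.support, x ≤ g) : f.support.max < (g : WithBot G) := by
  rcases Finset.eq_empty_or_nonempty f.support with h | h
  · simp [h]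
  · obtain ⟨m, hm⟩ := Finset.max_of_nonempty h
    rw [hm, WithBot.coe_lt_coe]
    have hmem := Finset.mem_of_max hm
    rcases lt_or_eq_of_le (hle m hmem) with h' | rfl
    · exact h'
    · exact absurd (Finsupp.mem_support_iff.mp hmem) (by simp [h0])

theorem quotient_iso_span_non_leading_terms (V : Submodule K (G →₀ K)) :
    Nonempty (((G →₀ K) ⧸ V) ≃ₗ[K]
      ↥(Submodule.span K ((fun g => single g (1 : K)) ''
        {g : G | ¬ ∃ v ∈ V, v ≠ 0 ∧ v.support.max = (g : WithBot G)}))) := by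
  set S : Set G := {g : G | ¬ ∃ v ∈ V, v ≠ 0 ∧ v.support.max = (g : WithBot G)} with hS
  set W : Submodule K (G →₀ K) :=
    Submodule.span K ((fun g => single g (1 : K)) '' S) with hW
  have hWsupp : W = Finsupp.supported K K S := (Finsupp.supported_eq_span_single (R:=K) S).symm
  have hdisj : Disjoint V W := by
    rw [Submodule.disjoint_def]
    intro v hv hvW
    by_contra hne
    have hsupp : ↑v.support ⊆ S := (Finsupp.mem_supported K v).mp (hWsupp ▸ hvW)
    have hne' : v.support.Nonempty := Finsupp.support_nonempty_iff.mpr hne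
    obtain ⟨g, hg⟩ := Finset.max_of_nonempty hne'
    have hgmem : g ∈ v.support := Finset.mem_of_max hg
    exact hsupp hgmem ⟨v, hv, hne, hg⟩
  have hcod : V ⊔ W = ⊤ := by
    rw [eq_top_iff]
    rintro f -
    have key : ∀ b : WithBot G, ∀ f : G →₀ K, f.support.max = b → f ∈ V ⊔ W := by
      intro b
      induction b using WellFoundedLT.induction with
      | _ b ih =>
        intro f hf
        rcases eq_or_ne f 0 with rfl | hne
        · exact Submodule.zero_mem _
        obtain ⟨g, hg⟩ := Finset.max_of_nonempty (Finsupp.support_nonempty_iff.mpr hne)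
        have hgmem : g ∈ f.support := Finset.mem_of_max hg
        have hle : ∀ x ∈ f.support, x ≤ g := fun x hx => by
          exact_mod_cast Finset.le_max_of_eq hx hg
        have hb : (↑g : WithBot G) = b := by rw [← hf, hg]
        by_cases hlt : ∃ v ∈ V, v ≠ 0 ∧ v.support.max = (g : WithBot G)
        · obtain ⟨v, hvV, hv0, hvmax⟩ := hlt
          have hgv : g ∈ v.support := Finset.mem_of_max hvmax
          have hvg : v g ≠ 0 := Finsupp.mem_support_iff.mp hgv
          set c : K := f g / v g with hc
          have h0 : (f - c • v) g = 0 := by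
            simp [hc, div_mul_cancel₀, hvg, Finsupp.sub_apply, Finsupp.smul_apply]
          have hle' : ∀ x ∈ (f - c • v).support, x ≤ g := by
            intro x hx
            have := Finsupp.support_sub (f := f) (g := c • v) hx
            rcases Finset.mem_union.mp this with h | h
            · exact hle x h
            · have := Finsupp.support_smul h
              exact_mod_cast Finset.le_max_of_eq this hvmax
          have hmlt : (f - c • v).support.max < (g : WithBot G) := aux_max_lt h0 hle'
          have hmem : f - c • v ∈ V ⊔ W := ih _ (hb ▸ hmlt) _ rfl
          rw [show f = (f - c • v) + c • v from (sub_add_cancel f _).symm]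
          exact Submodule.add_mem _ hmem (Submodule.mem_sup_left (V.smul_mem c hvV))
        · have hsing : single g (f g) ∈ W := by
            have h1 : single g (1 : K) ∈ W := Submodule.subset_span ⟨g, hlt, rfl⟩
            have := W.smul_mem (f g) h1
            rwa [Finsupp.smul_single, smul_eq_mul, mul_one] at this
          have h0 : (f - single g (f g)) g = 0 := by simp
          have hle' : ∀ x ∈ (f - single g (f g)).support, x ≤ g := by
            intro x hx
            rcases Finset.mem_union.mp (Finsupp.support_sub hx) with h | h
            · exact hle x h
            · have := Finsupp.support_single_subset h
              simp at this
              exact this.le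
          have hmlt := aux_max_lt h0 hle'
          have hmem : f - single g (f g) ∈ V ⊔ W := ih _ (hb ▸ hmlt) _ rfl
          rw [show f = (f - single g (f g)) + single g (f g) from (sub_add_cancel f _).symm]
          exact Submodule.add_mem _ hmem (Submodule.mem_sup_right hsing)
    exact key _ f rfl
  exact ⟨Submodule.quotientEquivOfIsCompl V W ⟨hdisj, codisjoint_iff.mpr hcod⟩⟩
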